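/- Let H_m be the complete 2-uniform hypergraph on m ≥ 3 vertices. Then the 1-fold local conflict-free chromatic number Δ_1(H_m) equals 2. -/

import Mathlib

/-- `C` is a `k`-fold conflict-free coloring of the hypergraph with edge set `E`. -/
def IsKFoldCF {V α : Type*} [DecidableEq α] (E : Finset (Finset V)) (k : ℕ)
    (C : V → Finset α) : Prop :=
  (∀ v, (C v).card = k) ∧
    ∀ e ∈ E, ∃ v ∈ e, ∀ u ∈ e, u ≠ v → Disjoint (C v) (C u)

/-- Edge `e` is satisfied by the color subset `D` under coloring `C`. -/
def EdgeSat {V α : Type*} [DecidableEq α] (C : V → Finset α) (D : Finset α)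
    (e : Finset V) : Prop :=
  ∃ v ∈ e, C v ⊆ D ∧ ∀ u ∈ e, u ≠ v → Disjoint (C v) (C u)

/-- The `k`-fold local conflict-free chromatic number `Δ_k(H)`: the minimum, over
`k`-fold conflict-free colorings `C` and essential color sets `D` (sets satisfying
every edge), of the maximum over edges `e` of the number of colors of `D`
appearing on `e`. -/
noncomputable def DeltaK {V : Type*} (E : Finset (Finset V)) (k : ℕ) : ℕ :=
  sInf {d | ∃ (L : ℕ) (C : V → Finset (Fin L)) (D : Finset (Fin L)),
    IsKFoldCF E k C ∧ (∀ e ∈ E, EdgeSat C D e) ∧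
    ∀ e ∈ E, ((e.biUnion C) ∩ D).card ≤ d}

/-- For the complete 2-uniform hypergraph on `m ≥ 3` vertices, the 1-fold local
conflict-free chromatic number equals `2`. -/
theorem stmt_15 (m : ℕ) (hm : 3 ≤ m) :
    DeltaK ((Finset.univ : Finset (Fin m)).powersetCard 2) 1 = 2 := by
  have h2mem : 2 ∈ {d | ∃ (L : ℕ) (C : Fin m → Finset (Fin L)) (D : Finset (Fin L)),
      IsKFoldCF ((Finset.univ : Finset (Fin m)).powersetCard 2) 1 C ∧
      (∀ e ∈ (Finset.univ : Finset (Fin m)).powersetCard 2, EdgeSat C D e) ∧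
      ∀ e ∈ (Finset.univ : Finset (Fin m)).powersetCard 2, ((e.biUnion C) ∩ D).card ≤ d} := by
    refine ⟨m, fun v => {v}, Finset.univ, ⟨fun v => rfl, ?_⟩, ?_, ?_⟩
    · intro e he
      rw [Finset.mem_powersetCard] at he
      obtain ⟨u, v, huv, rfl⟩ := Finset.card_eq_two.mp he.2
      refine ⟨u, by simp, fun w hw hne => ?_⟩
      simp only [Finset.mem_insert, Finset.mem_singleton] at hw
      rcases hw with rfl | rfl
      · exact absurd rfl hne
      · simp [Finset.disjoint_singleton, Ne.symm huv, huv]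
    · intro e he
      rw [Finset.mem_powersetCard] at he
      obtain ⟨u, v, huv, rfl⟩ := Finset.card_eq_two.mp he.2
      refine ⟨u, by simp, by simp, fun w hw hne => ?_⟩
      simp only [Finset.mem_insert, Finset.mem_singleton] at hw
      rcases hw with rfl | rfl
      · exact absurd rfl hne
      · simp [Finset.disjoint_singleton, Ne.symm huv, huv]
    · intro e he
      rw [Finset.mem_powersetCard] at he
      have hb : e.biUnion (fun v => ({v} : Finset (Fin m))) = e := by
        ext x; simp
      rw [hb, Finset.inter_univ, he.2]
  have lower : ∀ d ∈ {d | ∃ (L : ℕ) (C : Fin m → Finset (Fin L)) (D : Finset (Fin L)),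
      IsKFoldCF ((Finset.univ : Finset (Fin m)).powersetCard 2) 1 C ∧
      (∀ e ∈ (Finset.univ : Finset (Fin m)).powersetCard 2, EdgeSat C D e) ∧
      ∀ e ∈ (Finset.univ : Finset (Fin m)).powersetCard 2, ((e.biUnion C) ∩ D).card ≤ d},
      2 ≤ d := by
    rintro d ⟨L, C, D, ⟨hcard, hcf⟩, hsat, hmax⟩
    have key : ∀ x y : Fin m, x ≠ y → C x ⊆ D → C y ⊆ D → 2 ≤ d := by
      intro x y hxy hx hy
      have he : ({x, y} : Finset (Fin m)) ∈ (Finset.univ : Finset (Fin m)).powersetCard 2 := by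
        rw [Finset.mem_powersetCard]
        exact ⟨Finset.subset_univ _, Finset.card_pair hxy⟩
      have hdisj : Disjoint (C x) (C y) := by
        obtain ⟨w, hw, hwd⟩ := hcf _ he
        simp only [Finset.mem_insert, Finset.mem_singleton] at hw
        rcases hw with rfl | rfl
        · exact (hwd y (by simp) (Ne.symm hxy))
        · exact (hwd x (by simp) hxy).symm
      have hsub : C x ∪ C y ⊆ (({x, y} : Finset (Fin m)).biUnion C) ∩ D := by
        intro a ha
        rw [Finset.mem_inter]
        rcases Finset.mem_union.mp ha with h | h
        · exact ⟨Finset.mem_biUnion.mpr ⟨x, by simp, h⟩, hx h⟩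
        · exact ⟨Finset.mem_biUnion.mpr ⟨y, by simp, h⟩, hy h⟩
      have h2 : 2 ≤ (C x ∪ C y).card := by
        rw [Finset.card_union_of_disjoint hdisj, hcard, hcard]
      exact h2.trans ((Finset.card_le_card hsub).trans (hmax _ he))
    have ha : (⟨0, by omega⟩ : Fin m) ≠ ⟨1, by omega⟩ := by simp [Fin.ext_iff]
    have hb : (⟨0, by omega⟩ : Fin m) ≠ ⟨2, by omega⟩ := by simp [Fin.ext_iff]
    have hc : (⟨1, by omega⟩ : Fin m) ≠ ⟨2, by omega⟩ := by simp [Fin.ext_iff]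
    have getsat : ∀ x y : Fin m, x ≠ y → C x ⊆ D ∨ C y ⊆ D := by
      intro x y hxy
      have he : ({x, y} : Finset (Fin m)) ∈ (Finset.univ : Finset (Fin m)).powersetCard 2 := by
        rw [Finset.mem_powersetCard]
        exact ⟨Finset.subset_univ _, Finset.card_pair hxy⟩
      obtain ⟨v, hv, hvD, _⟩ := hsat _ he
      simp only [Finset.mem_insert, Finset.mem_singleton] at hv
      rcases hv with rfl | rfl
      · exact Or.inl hvD
      · exact Or.inr hvD
    rcases getsat _ _ ha with p1 | p1 <;> rcases getsat _ _ hb with p2 | p2 <;>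
      rcases getsat _ _ hc with p3 | p3
    · exact key _ _ ha p1 p3
    · exact key _ _ hb p1 p3
    · exact key _ _ ha p1 p3
    · exact key _ _ hb p1 p3
    · exact key _ _ ha p2 p1
    · exact key _ _ ha p2 p1
    · exact key _ _ hc p1 p2
    · exact key _ _ hc p1 p2
  exact le_antisymm (Nat.sInf_le h2mem) (le_csInf ⟨2, h2mem⟩ lower)
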